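/- For k ≥ 2 and q ≥ 1, define the first-choice labeling ℓ* : V_{k,q} → {1,…,k} by ℓ*(a) = min{ i : a_i > 0 }. Then ℓ* is Sperner-admissible, a cell e(b) (b ∈ V_{k,q-1}) is non-monochromatic under ℓ* if and only if b_1 = 0, and the number of non-monochromatic cells under ℓ* is exactly C(q+k-3, k-2). -/

import Mathlib

/-- The first-choice labeling: `ℓ*(a) = min { i : a_i > 0 }` (with an arbitrary
default value when `a = 0`, which never occurs on `V_{k,q}` for `q ≥ 1`). -/
noncomputable def firstChoice (k : ℕ) (hk : 0 < k) (a : Fin k → ℕ) : Fin k :=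
  if h : (Finset.univ.filter fun i => 0 < a i).Nonempty then
    (Finset.univ.filter fun i => 0 < a i).min' h
  else ⟨0, hk⟩

lemma sum_choose_aux (k : ℕ) : ∀ n : ℕ, ∑ j ∈ Finset.range (n+1), (j+k).choose k = (n+k+1).choose (k+1) := by
  intro n
  induction n with
  | zero => simp
  | succ n ih =>
    rw [Finset.sum_range_succ, ih]
    rw [show n+1+k+1 = (n+k+1)+1 by ring, Nat.choose_succ_succ (n+k+1) k,
      show n+1+k = n+k+1 by ring]
    simp [Nat.succ_eq_add_one]
    omega

lemma len_AT (k : ℕ) : ∀ n : ℕ, (List.Nat.antidiagonalTuple (k+1) n).length = (n+k).choose k := by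
  induction k with
  | zero => intro n; rw [List.Nat.antidiagonalTuple_one]; simp
  | succ k ih =>
    intro n
    rw [List.Nat.antidiagonalTuple, List.length_flatMap]
    simp only [Function.comp_def, List.length_map, ih]
    rw [List.Nat.antidiagonal, List.map_map]
    have h1 : ((List.range (n+1)).map ((fun p : ℕ × ℕ => ((p.2) + k).choose k) ∘ (fun i => (i, n-i)))).sum
        = ∑ i ∈ Finset.range (n+1), ((n-i)+k).choose k := rfl
    rw [h1]
    have h2 := Finset.sum_range_reflect (fun j => (j+k).choose k) (n+1)
    simp only [Nat.add_sub_cancel] at h2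
    calc (∑ i ∈ Finset.range (n+1), (n - i + k).choose k)
        = ∑ j ∈ Finset.range (n + 1), (n + 1 - 1 - j + k).choose k := by simp
      _ = ∑ j ∈ Finset.range (n+1), (j+k).choose k := h2
      _ = (n+k+1).choose (k+1) := sum_choose_aux k n

lemma card_AT (k n : ℕ) : (Finset.Nat.antidiagonalTuple (k+1) n).card = (n+k).choose k :=
  len_AT k n

lemma fc_pos {k : ℕ} (hk : 0 < k) {a : Fin k → ℕ} (h : ∃ i, 0 < a i) :
    0 < a (firstChoice k hk a) := by
  obtain ⟨i, hi⟩ := h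
  have hne : (Finset.univ.filter fun i => 0 < a i).Nonempty :=
    ⟨i, by simp [hi]⟩
  rw [firstChoice, dif_pos hne]
  have := Finset.min'_mem _ hne
  simpa using this

lemma fc_eq_zero {k : ℕ} (hk : 0 < k) {a : Fin k → ℕ} (h : 0 < a ⟨0, hk⟩) :
    firstChoice k hk a = ⟨0, hk⟩ := by
  have hmem : (⟨0, hk⟩ : Fin k) ∈ Finset.univ.filter fun i => 0 < a i := by simp [h]
  have hne : (Finset.univ.filter fun i => 0 < a i).Nonempty := ⟨_, hmem⟩
  rw [firstChoice, dif_pos hne]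
  have hle := Finset.min'_le _ _ hmem
  have : ((Finset.univ.filter fun i => 0 < a i).min' hne : Fin k) ≤ ⟨0, hk⟩ := hle
  exact le_antisymm this (by exact Fin.mk_le_mk.mpr (Nat.zero_le _))

lemma sum_add_ite {k : ℕ} (b : Fin k → ℕ) (i : Fin k) :
    (∑ t, (b t + if t = i then 1 else 0)) = (∑ t, b t) + 1 := by
  rw [Finset.sum_add_distrib, Finset.sum_ite_eq' Finset.univ i (fun _ => 1)]
  simp

/-- For `k ≥ 2`, `q ≥ 1`, the first-choice labeling `ℓ*` is
Sperner-admissible; a cell `e(b)` (`b ∈ V_{k,q-1}`) is non-monochromatic under `ℓ*`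
iff `b_1 = 0`; and the number of non-monochromatic cells is exactly `C(q+k-3, k-2)`. -/
theorem firstChoice_admissible_nonmono_iff_card (k q : ℕ) (hk : 2 ≤ k) (hq : 1 ≤ q) :
    (∀ a : Fin k → ℕ, (∑ i, a i) = q → 0 < a (firstChoice k (by omega) a)) ∧
    (∀ b : Fin k → ℕ, (∑ i, b i) = q - 1 →
      ((∃ i j : Fin k,
          firstChoice k (by omega) (fun t => b t + if t = i then 1 else 0) ≠
            firstChoice k (by omega) (fun t => b t + if t = j then 1 else 0)) ↔
        b ⟨0, by omega⟩ = 0)) ∧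
    ((Finset.Nat.antidiagonalTuple k (q - 1)).filter fun b =>
        ∃ i j : Fin k,
          firstChoice k (by omega) (fun t => b t + if t = i then 1 else 0) ≠
            firstChoice k (by omega) (fun t => b t + if t = j then 1 else 0)).card =
      Nat.choose (q + k - 3) (k - 2) := by
  have hk0 : 0 < k := by omega
  -- key iff, for any b with the right sum
  have key : ∀ b : Fin k → ℕ, (∑ i, b i) = q - 1 →
      ((∃ i j : Fin k,
          firstChoice k hk0 (fun t => b t + if t = i then 1 else 0) ≠
            firstChoice k hk0 (fun t => b t + if t = j then 1 else 0)) ↔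
        b ⟨0, hk0⟩ = 0) := by
    intro b hb
    constructor
    · intro ⟨i, j, hij⟩
      by_contra h0
      have h0' : 0 < b ⟨0, hk0⟩ := Nat.pos_of_ne_zero h0
      have e1 := fc_eq_zero hk0 (a := fun t => b t + if t = i then 1 else 0)
        (by omega)
      have e2 := fc_eq_zero hk0 (a := fun t => b t + if t = j then 1 else 0)
        (by omega)
      exact hij (e1.trans e2.symm)
    · intro h0
      refine ⟨⟨0, hk0⟩, ⟨1, by omega⟩, ?_⟩
      have e1 : firstChoice k hk0 (fun t => b t + if t = ⟨0, hk0⟩ then 1 else 0) = ⟨0, hk0⟩ :=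
        fc_eq_zero hk0 (by simp)
      rw [e1]
      intro hcontra
      have hpos := fc_pos hk0 (a := fun t => b t + if t = (⟨1, by omega⟩ : Fin k) then 1 else 0)
        ⟨⟨1, by omega⟩, by simp⟩
      rw [← hcontra] at hpos
      have hne : (⟨0, hk0⟩ : Fin k) ≠ (⟨1, by omega⟩ : Fin k) := by
        intro h; exact absurd (congrArg Fin.val h) (by simp)
      simp only [if_neg hne] at hpos
      omega
  refine ⟨?_, ?_, ?_⟩
  · intro a ha
    apply fc_pos
    by_contra hc
    push_neg at hc
    have : ∑ i, a i = 0 := Finset.sum_eq_zero (fun i _ => by have := hc i; omega)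
    omega
  · exact key
  · -- counting
    obtain ⟨m, rfl⟩ : ∃ m, k = m + 2 := ⟨k - 2, by omega⟩
    have hfilter : ((Finset.Nat.antidiagonalTuple (m+2) (q - 1)).filter fun b =>
        ∃ i j : Fin (m+2),
          firstChoice (m+2) hk0 (fun t => b t + if t = i then 1 else 0) ≠
            firstChoice (m+2) hk0 (fun t => b t + if t = j then 1 else 0)) =
        ((Finset.Nat.antidiagonalTuple (m+2) (q - 1)).filter fun b => b ⟨0, hk0⟩ = 0) := by
      apply Finset.filter_congr
      intro b hb
      rw [Finset.Nat.mem_antidiagonalTuple] at hb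
      simpa using key b hb
    rw [hfilter]
    have hcard : ((Finset.Nat.antidiagonalTuple (m+2) (q - 1)).filter fun b => b ⟨0, hk0⟩ = 0).card
        = (Finset.Nat.antidiagonalTuple (m+1) (q - 1)).card := by
      refine Finset.card_bij' (fun b _ => b ∘ Fin.succ) (fun c _ => Fin.cons 0 c) ?hi ?hj ?li ?ri
      case hi =>
        intro b hb
        simp only [Finset.mem_filter, Finset.Nat.mem_antidiagonalTuple] at hb ⊢
        obtain ⟨hsum, h0⟩ := hb
        rw [Fin.sum_univ_succ] at hsum
        have : b 0 = 0 := h0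
        simpa [this] using hsum
      case hj =>
        intro c hc
        simp only [Finset.mem_filter, Finset.Nat.mem_antidiagonalTuple] at hc ⊢
        constructor
        · rw [Fin.sum_univ_succ]
          simpa using hc
        · exact Fin.cons_zero _ _
      case li =>
        intro b hb
        simp only [Finset.mem_filter] at hb
        funext t
        refine Fin.cases ?_ (fun s => ?_) t
        · simpa using hb.2.symm
        · simp
      case ri =>
        intro c hc
        funext t
        simp
    rw [hcard, card_AT]
    have h3 : q + (m + 2) - 3 = q - 1 + m := by clear key hfilter hcard; omega
    rw [h3]
    rfl
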